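/- Identity of power series for Golod–Shafarevich type groups: suppose d, r are positive integers with 1 − dT + rT^2 = (1 − αT)(1 − βT) for real numbers α ≥ β > 0 (i.e. d = α + β, r = αβ), and suppose nonnegative integers (b_i)_{i≥1} satisfy the formal power series identity ∏_{i≥1} ((1 − T^{pi})/(1 − T^i))^{b_i} = 1/((1 − αT)(1 − βT)) over ℝ. Then for every positive integer m coprime to p, α^m + β^m = Σ_{i | m} i·b_i. -/

import Mathlib

open PowerSeries Finset

namespace GSaux

/-- logarithmic derivative -/
noncomputable def LD (f : PowerSeries ℝ) : PowerSeries ℝ := X * (d⁄dX ℝ f) * f⁻¹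

lemma coeff_eq_of_dvd {n : ℕ} {f g : PowerSeries ℝ} (h : (X : PowerSeries ℝ)^(n+1) ∣ f - g) :
    coeff (R := ℝ) n f = coeff (R := ℝ) n g := by
  have := (PowerSeries.X_pow_dvd_iff).mp h n (Nat.lt_succ_self n)
  rw [map_sub, sub_eq_zero] at this
  exact this

lemma dvd_prod_sub_one {k : ℕ} {s : Finset ℕ} {f : ℕ → PowerSeries ℝ}
    (h : ∀ i ∈ s, (X : PowerSeries ℝ)^k ∣ f i - 1) :
    (X : PowerSeries ℝ)^k ∣ (∏ i ∈ s, f i) - 1 := by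
  induction s using Finset.induction_on with
  | empty => simp
  | @insert a s ha ih =>
    rw [Finset.prod_insert ha]
    have h1 : (X : PowerSeries ℝ)^k ∣ f a - 1 := h a (Finset.mem_insert_self a s)
    have h2 := ih (fun i hi => h i (Finset.mem_insert_of_mem hi))
    have : f a * (∏ i ∈ s, f i) - 1
        = f a * ((∏ i ∈ s, f i) - 1) + (f a - 1) := by ring
    rw [this]
    exact dvd_add (Dvd.dvd.mul_left h2 _) h1

lemma LD_mul {f g : PowerSeries ℝ} (hf : constantCoeff (R := ℝ) f ≠ 0)
    (hg : constantCoeff (R := ℝ) g ≠ 0) : LD (f * g) = LD f + LD g := by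
  unfold LD
  rw [Derivation.leibniz, PowerSeries.mul_inv_rev]
  have hf1 : f * f⁻¹ = 1 := PowerSeries.mul_inv_cancel f hf
  have hg1 : g * g⁻¹ = 1 := PowerSeries.mul_inv_cancel g hg
  have : X * (f • d⁄dX ℝ g + g • d⁄dX ℝ f) * (g⁻¹ * f⁻¹)
      = (f * f⁻¹) * (X * d⁄dX ℝ g * g⁻¹) + (g * g⁻¹) * (X * d⁄dX ℝ f * f⁻¹) := by
    simp only [smul_eq_mul]; ring
  rw [this, hf1, hg1, one_mul, one_mul, add_comm]

lemma LD_pow {f : PowerSeries ℝ} (hf : constantCoeff (R := ℝ) f ≠ 0) (n : ℕ) :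
    LD (f ^ n) = n • LD f := by
  induction n with
  | zero => simp [LD]
  | succ n ih =>
    rw [pow_succ, LD_mul (by rw [map_pow]; exact pow_ne_zero _ hf) hf, ih,
      succ_nsmul]

lemma LD_prod {s : Finset ℕ} {f : ℕ → PowerSeries ℝ}
    (h : ∀ i ∈ s, constantCoeff (R := ℝ) (f i) ≠ 0) :
    LD (∏ i ∈ s, f i) = ∑ i ∈ s, LD (f i) := by
  induction s using Finset.induction_on with
  | empty => simp [LD]
  | @insert a s ha ih =>
    rw [Finset.prod_insert ha, Finset.sum_insert ha,
      LD_mul (h a (Finset.mem_insert_self a s)) ?_,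
      ih (fun i hi => h i (Finset.mem_insert_of_mem hi))]
    rw [map_prod]
    exact Finset.prod_ne_zero_iff.mpr (fun i hi => h i (Finset.mem_insert_of_mem hi))

end GSaux

namespace GSaux

noncomputable def S (k : ℕ) : PowerSeries ℝ := mk fun n => if k ∣ n then 1 else 0

lemma geom_inv {k : ℕ} (hk : 0 < k) : ((1 : PowerSeries ℝ) - X^k) * S k = 1 := by
  ext n
  rw [sub_mul, one_mul, map_sub, coeff_X_pow_mul', coeff_one]
  rcases Nat.eq_zero_or_pos n with hn | hn
  · subst hn
    simp [S, coeff_mk, Nat.not_succ_le_zero, hk.ne']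
  · simp only [S, coeff_mk, hn.ne', if_false]
    by_cases hkn : k ≤ n
    · rw [if_pos hkn]
      have : k ∣ n ↔ k ∣ n - k := by
        constructor
        · intro h; exact Nat.dvd_sub h dvd_rfl
        · intro h; have := Nat.sub_add_cancel hkn; rw [← this]; exact Nat.dvd_add h dvd_rfl
      by_cases hd : k ∣ n
      · rw [if_pos hd, if_pos (this.mp hd), sub_self]
      · rw [if_neg hd, if_neg (fun hc => hd (this.mpr hc)), sub_self]
    · rw [if_neg hkn, if_neg (fun hd : k ∣ n => hkn (Nat.le_of_dvd hn hd)), sub_zero]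

lemma constCoeff_Xpow_sub_one {k : ℕ} (hk : 0 < k) :
    constantCoeff (R := ℝ) ((X : PowerSeries ℝ)^k - 1) ≠ 0 := by
  rw [map_sub, map_pow, constantCoeff_X, zero_pow hk.ne', map_one, zero_sub]
  norm_num

lemma inv_Xpow_sub_one {k : ℕ} (hk : 0 < k) :
    ((X : PowerSeries ℝ)^k - 1)⁻¹ = -(S k) := by
  symm
  rw [PowerSeries.eq_inv_iff_mul_eq_one (constCoeff_Xpow_sub_one hk)]
  have : -S k * ((X : PowerSeries ℝ)^k - 1) = ((1 : PowerSeries ℝ) - X^k) * S k := by ring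
  rw [this, geom_inv hk]

lemma coeff_LD_Xpow_sub_one {k m : ℕ} (hk : 0 < k) (hm : 0 < m) :
    coeff (R := ℝ) m (LD ((X : PowerSeries ℝ)^k - 1)) = if k ∣ m then -(k : ℝ) else 0 := by
  unfold LD
  rw [map_sub, Derivation.map_one_eq_zero, sub_zero, Derivation.leibniz_pow,
    PowerSeries.derivative_X, smul_eq_mul, mul_one, inv_Xpow_sub_one hk]
  have hX : (X : PowerSeries ℝ) * (k • X ^ (k-1)) * (-(S k)) = -(k • ((X:PowerSeries ℝ)^k * S k)) := by
    have : (X : PowerSeries ℝ) * X ^ (k-1) = X ^ k := by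
      rw [← pow_succ']
      congr 1
      omega
    rw [mul_smul_comm, smul_mul_assoc, this, mul_neg, ← smul_neg]
  rw [hX, map_neg, map_nsmul, nsmul_eq_mul, coeff_X_pow_mul']
  by_cases hd : k ∣ m
  · have hkm : k ≤ m := Nat.le_of_dvd hm hd
    rw [if_pos hd, if_pos hkm]
    have : coeff (R := ℝ) (m - k) (S k) = 1 := by
      simp only [S, coeff_mk]
      rw [if_pos]
      exact (Nat.dvd_sub hd dvd_rfl)
    rw [this, mul_one]
  · rw [if_neg hd]
    by_cases hkm : k ≤ m
    · rw [if_pos hkm]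
      have : coeff (R := ℝ) (m - k) (S k) = 0 := by
        simp only [S, coeff_mk]
        rw [if_neg]
        intro hc
        exact hd (by have := Nat.sub_add_cancel hkm; rw [← this]; exact Nat.dvd_add hc dvd_rfl)
      rw [this, mul_zero, neg_zero]
    · rw [if_neg hkm, mul_zero, neg_zero]

end GSaux

namespace GSaux

noncomputable def g (p i : ℕ) : PowerSeries ℝ := ∑ j ∈ Finset.range p, (X : PowerSeries ℝ) ^ (i * j)

lemma g_sub_one {p i : ℕ} (hp : 0 < p) :
    g p i - 1 = ∑ j ∈ Finset.range (p-1), (X : PowerSeries ℝ) ^ (i * (j+1)) := by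
  unfold g
  have : p = (p - 1) + 1 := by omega
  rw [this, Finset.sum_range_succ']
  simp

lemma X_pow_dvd_g_sub_one {p i : ℕ} (hp : 0 < p) :
    (X : PowerSeries ℝ) ^ i ∣ g p i - 1 := by
  rw [g_sub_one hp]
  apply Finset.dvd_sum
  intro j _
  exact pow_dvd_pow X (by nlinarith)

lemma constCoeff_g {p i : ℕ} (hp : 0 < p) (hi : 0 < i) :
    constantCoeff (R := ℝ) (g p i) = 1 := by
  have h := X_pow_dvd_g_sub_one (p := p) (i := i) hp
  have h0 : coeff (R := ℝ) 0 (g p i - 1) = 0 := by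
    exact PowerSeries.X_pow_dvd_iff.mp h 0 hi
  rw [map_sub, sub_eq_zero] at h0
  rw [← coeff_zero_eq_constantCoeff_apply]
  simpa using h0

lemma g_mul_geom {p i : ℕ} :
    g p i * ((X : PowerSeries ℝ)^i - 1) = (X : PowerSeries ℝ)^(i*p) - 1 := by
  unfold g
  have : ∀ j, (X : PowerSeries ℝ) ^ (i * j) = ((X : PowerSeries ℝ)^i)^j := fun j => by
    rw [← pow_mul]
  simp_rw [this]
  rw [geom_sum_mul, ← pow_mul]

lemma coeff_LD_g {p i m : ℕ} (hp : 0 < p) (hi : 0 < i) (hm : 0 < m) (hpm : ¬ p ∣ m) :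
    coeff (R := ℝ) m (LD (g p i)) = if i ∣ m then (i : ℝ) else 0 := by
  have hc1 : constantCoeff (R := ℝ) (g p i) ≠ 0 := by rw [constCoeff_g hp hi]; norm_num
  have hc2 := constCoeff_Xpow_sub_one (k := i) hi
  have hLD : LD (g p i) + LD ((X : PowerSeries ℝ)^i - 1)
      = LD ((X : PowerSeries ℝ)^(i*p) - 1) := by
    rw [← LD_mul hc1 hc2, g_mul_geom]
  have := congrArg (coeff (R := ℝ) m) hLD
  rw [map_add, coeff_LD_Xpow_sub_one hi hm,
    coeff_LD_Xpow_sub_one (by positivity) hm] at this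
  have hipm : ¬ (i * p ∣ m) := fun hc => hpm ((dvd_of_mul_left_dvd (by rwa [mul_comm] at hc)))
  rw [if_neg hipm] at this
  by_cases hd : i ∣ m
  · rw [if_pos hd] at this ⊢
    linarith
  · rw [if_neg hd] at this ⊢
    linarith

end GSaux

namespace GSaux

lemma one_sub_CX_mul_mk (a : ℝ) :
    ((1 : PowerSeries ℝ) - C (R := ℝ) a * X) * PowerSeries.mk (fun n => a ^ n) = 1 := by
  ext n
  rw [sub_mul, one_mul, map_sub, coeff_one]
  cases n with
  | zero => simp
  | succ n =>
    rw [mul_assoc, coeff_C_mul, coeff_succ_X_mul, coeff_mk, coeff_mk, pow_succ,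
      mul_comm (a^n) a, sub_self, if_neg (Nat.succ_ne_zero n)]

lemma X_pow_dvd_derivative {n : ℕ} {f : PowerSeries ℝ}
    (h : (X : PowerSeries ℝ)^(n+1) ∣ f) : (X : PowerSeries ℝ)^n ∣ d⁄dX ℝ f := by
  rw [PowerSeries.X_pow_dvd_iff] at h ⊢
  intro k hk
  rw [PowerSeries.coeff_derivative, h (k+1) (by omega), zero_mul]

lemma dvd_pow_sub_one {k b : ℕ} {f : PowerSeries ℝ} (h : (X : PowerSeries ℝ)^k ∣ f - 1) :
    (X : PowerSeries ℝ)^k ∣ f ^ b - 1 := by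
  have : f - 1 ∣ f ^ b - 1 := by
    have := sub_dvd_pow_sub_pow f 1 b
    rwa [one_pow] at this
  exact h.trans this

end GSaux

open GSaux

/-- Power series identity for Golod–Shafarevich type groups: if
`∏_{i≥1} ((1−T^{pi})/(1−T^i))^{b_i} = 1/((1−αT)(1−βT))` as formal power series
(each factor being `(1 + T^i + ⋯ + T^{(p−1)i})^{b_i}`, encoded via the
truncated products which agree with the full product in each degree), where
`1 − dT + rT² = (1−αT)(1−βT)` with `α ≥ β > 0`, then for every `m` coprime
to `p` one has `α^m + β^m = Σ_{i ∣ m} i·b_i`. -/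
theorem golod_shafarevich_power_series_identity
    (p : ℕ) (hp : p.Prime) (d r : ℕ) (hd : 0 < d) (hr : 0 < r)
    (α β : ℝ) (hαβ : β ≤ α) (hβ : 0 < β)
    (hsum : α + β = d) (hprod : α * β = r)
    (b : ℕ → ℕ)
    (hps : ∀ N : ℕ,
      (PowerSeries.coeff (R := ℝ) N)
        ((∏ i ∈ Finset.Icc 1 N,
            (∑ j ∈ Finset.range p, (PowerSeries.X : PowerSeries ℝ) ^ (i * j)) ^ (b i)) *
          ((1 - PowerSeries.C (R := ℝ) α * PowerSeries.X) *
            (1 - PowerSeries.C (R := ℝ) β * PowerSeries.X)))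
        = if N = 0 then 1 else 0) :
    ∀ m : ℕ, 0 < m → ¬ p ∣ m →
      α ^ m + β ^ m = ∑ i ∈ m.divisors, (i : ℝ) * (b i) := by
  intro m hm hpm
  classical
  have hp1 : 0 < p := hp.pos
  set P : ℕ → PowerSeries ℝ := fun N => ∏ i ∈ Finset.Icc 1 N, (g p i) ^ (b i) with hPdef
  set G : PowerSeries ℝ := (1 - C (R := ℝ) α * X) * (1 - C (R := ℝ) β * X) with hGdef
  have hps' : ∀ N, coeff (R := ℝ) N (P N * G) = if N = 0 then 1 else 0 := hps
  set F : PowerSeries ℝ := PowerSeries.mk (fun n => coeff (R := ℝ) n (P n)) with hFdef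
  -- truncation
  have hPg : ∀ n N, n ≤ N → (X : PowerSeries ℝ)^(n+1) ∣ P N - P n := by
    intro n N hnN
    have e1 : Finset.Icc 1 n = Finset.Ioc 0 n := Finset.Icc_add_one_left_eq_Ioc 0 n
    have e2 : Finset.Icc 1 N = Finset.Ioc 0 N := Finset.Icc_add_one_left_eq_Ioc 0 N
    have hsplit : P n * (∏ i ∈ Finset.Ioc n N, (g p i) ^ (b i)) = P N := by
      simp only [hPdef, e1, e2]
      exact Finset.prod_Ioc_consecutive _ (Nat.zero_le n) hnN
    have hq : (X : PowerSeries ℝ)^(n+1) ∣ (∏ i ∈ Finset.Ioc n N, (g p i) ^ (b i)) - 1 := by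
      apply dvd_prod_sub_one
      intro i hi
      have hni : n + 1 ≤ i := (Finset.mem_Ioc.mp hi).1
      apply dvd_pow_sub_one
      exact (pow_dvd_pow (X : PowerSeries ℝ) hni).trans (X_pow_dvd_g_sub_one hp1)
    have : P N - P n = P n * ((∏ i ∈ Finset.Ioc n N, (g p i) ^ (b i)) - 1) := by
      rw [mul_sub, hsplit, mul_one]
    rw [this]
    exact hq.mul_left _
  have hFP : ∀ N, (X : PowerSeries ℝ)^(N+1) ∣ F - P N := by
    intro N
    rw [PowerSeries.X_pow_dvd_iff]
    intro k hk
    rw [map_sub, hFdef, coeff_mk, coeff_eq_of_dvd (hPg k N (by omega)), sub_self]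
  have hFG : F * G = 1 := by
    ext N
    have h1 : (X : PowerSeries ℝ)^(N+1) ∣ F * G - P N * G := by
      rw [← sub_mul]; exact (hFP N).mul_right G
    rw [coeff_eq_of_dvd h1, hps' N, coeff_one]
  -- constant coefficients
  have hcPm : constantCoeff (R := ℝ) (P m) = 1 := by
    rw [hPdef, map_prod]
    apply Finset.prod_eq_one
    intro i hi
    rw [map_pow, constCoeff_g hp1 (Finset.mem_Icc.mp hi).1, one_pow]
  have hPmG : (X : PowerSeries ℝ)^(m+1) ∣ P m * G - 1 := by
    have : P m * G - 1 = (P m - F) * G := by rw [sub_mul, hFG]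
    rw [this]
    exact ((dvd_sub_comm.mp (hFP m)).mul_right G)
  -- derivative of F G = 1
  have hder : (d⁄dX ℝ F) * G = -(F * d⁄dX ℝ G) := by
    have h0 : d⁄dX ℝ (F * G) = 0 := by rw [hFG, Derivation.map_one_eq_zero]
    rw [Derivation.leibniz, smul_eq_mul, smul_eq_mul] at h0
    have := h0
    linear_combination h0
  -- evaluation (A)
  have hA : coeff (R := ℝ) m (X * d⁄dX ℝ F * G) = α ^ m + β ^ m := by
    have hdG : d⁄dX ℝ G = (1 - C (R := ℝ) α * X) * (-(C (R := ℝ) β)) + (1 - C (R := ℝ) β * X) * (-(C (R := ℝ) α)) := by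
      rw [hGdef, Derivation.leibniz, smul_eq_mul, smul_eq_mul]
      congr 1
      · congr 1
        rw [map_sub, Derivation.map_one_eq_zero, Derivation.leibniz, smul_eq_mul, smul_eq_mul,
          PowerSeries.derivative_X, PowerSeries.derivative_C, mul_one, mul_zero, add_zero,
          zero_sub]
      · congr 1
        rw [map_sub, Derivation.map_one_eq_zero, Derivation.leibniz, smul_eq_mul, smul_eq_mul,
          PowerSeries.derivative_X, PowerSeries.derivative_C, mul_one, mul_zero, add_zero,
          zero_sub]
    have hAα : (1 - C (R := ℝ) β * X) * F = PowerSeries.mk (fun n => α ^ n) := by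
      have hne : (1 - C (R := ℝ) α * X : PowerSeries ℝ) ≠ 0 := by
        intro h
        have := congrArg (constantCoeff (R := ℝ)) h
        simp at this
      apply mul_left_cancel₀ hne
      rw [one_sub_CX_mul_mk α, ← mul_assoc, ← hGdef, mul_comm G F]
      exact hFG
    have hAβ : (1 - C (R := ℝ) α * X) * F = PowerSeries.mk (fun n => β ^ n) := by
      have hne : (1 - C (R := ℝ) β * X : PowerSeries ℝ) ≠ 0 := by
        intro h
        have := congrArg (constantCoeff (R := ℝ)) h
        simp at this
      apply mul_left_cancel₀ hne
      rw [one_sub_CX_mul_mk β, ← mul_assoc, mul_comm (1 - C (R := ℝ) β * X) (1 - C (R := ℝ) α * X),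
        ← hGdef, mul_comm G F]
      exact hFG
    have key : X * d⁄dX ℝ F * G
        = C (R := ℝ) α * (X * ((1 - C (R := ℝ) β * X) * F)) + C (R := ℝ) β * (X * ((1 - C (R := ℝ) α * X) * F)) := by
      have : X * d⁄dX ℝ F * G = X * ((d⁄dX ℝ F) * G) := by ring
      rw [this, hder, hdG]
      ring
    rw [key, hAα, hAβ, map_add]
    obtain ⟨m', rfl⟩ : ∃ m', m = m' + 1 := ⟨m - 1, by omega⟩
    rw [coeff_C_mul, coeff_C_mul, coeff_succ_X_mul, coeff_succ_X_mul, coeff_mk, coeff_mk,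
      ← pow_succ', ← pow_succ']
  -- evaluation (B)
  have hB : coeff (R := ℝ) (m) (X * d⁄dX ℝ F * G) = ∑ i ∈ m.divisors, (i : ℝ) * (b i) := by
    have h1 : coeff (R := ℝ) m (X * d⁄dX ℝ F * G) = coeff (R := ℝ) m (X * d⁄dX ℝ (P m) * G) := by
      apply coeff_eq_of_dvd
      have : X * d⁄dX ℝ F * G - X * d⁄dX ℝ (P m) * G = X * d⁄dX ℝ (F - P m) * G := by
        rw [map_sub]; ring
      rw [this]
      have h2 : (X : PowerSeries ℝ)^m ∣ d⁄dX ℝ (F - P m) := X_pow_dvd_derivative (hFP m)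
      have h3 : (X : PowerSeries ℝ)^(m+1) ∣ X * d⁄dX ℝ (F - P m) := by
        rw [pow_succ']
        exact mul_dvd_mul_left X h2
      exact h3.mul_right G
    have h2 : coeff (R := ℝ) m (X * d⁄dX ℝ (P m) * G) = coeff (R := ℝ) m (LD (P m)) := by
      apply coeff_eq_of_dvd
      unfold LD
      have hPinv : P m * (P m)⁻¹ = 1 := PowerSeries.mul_inv_cancel _ (by rw [hcPm]; norm_num)
      have : X * d⁄dX ℝ (P m) * G - X * d⁄dX ℝ (P m) * (P m)⁻¹
          = (X * d⁄dX ℝ (P m) * (P m)⁻¹) * (P m * G - 1) := by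
        rw [mul_sub, mul_one]
        have : X * d⁄dX ℝ (P m) * (P m)⁻¹ * (P m * G)
            = (P m * (P m)⁻¹) * (X * d⁄dX ℝ (P m) * G) := by ring
        rw [this, hPinv, one_mul]
      rw [this]
      exact hPmG.mul_left _
    have h3 : coeff (R := ℝ) m (LD (P m)) = ∑ i ∈ Finset.Icc 1 m, (b i : ℝ) * (if i ∣ m then (i:ℝ) else 0) := by
      rw [hPdef]
      rw [LD_prod (fun i hi => by
        rw [map_pow, constCoeff_g hp1 (Finset.mem_Icc.mp hi).1, one_pow]; norm_num)]
      rw [map_sum]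
      apply Finset.sum_congr rfl
      intro i hi
      rw [LD_pow (by rw [constCoeff_g hp1 (Finset.mem_Icc.mp hi).1]; norm_num),
        map_nsmul, nsmul_eq_mul, coeff_LD_g hp1 (Finset.mem_Icc.mp hi).1 hm hpm]
    rw [h1, h2, h3]
    have hIcc : Finset.Icc 1 m = Finset.Ico 1 (m+1) := by
      rw [Finset.Ico_add_one_right_eq_Icc]
    rw [Nat.divisors, ← hIcc, Finset.sum_filter]
    apply Finset.sum_congr rfl
    intro i hi
    by_cases hd : i ∣ m
    · rw [if_pos hd, if_pos hd, mul_comm]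
    · rw [if_neg hd, if_neg hd, mul_zero]
  rw [← hA, hB]
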